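/- Let (N_{r,t})_{r≤t} be a skew convolution semigroup associated with (Q_{r,t}) and let G_t(f,·) be the Radon measure on (−∞,t] induced by the non-increasing function r ↦ J_{r,t}(f). Then there exists a diffuse (atomless) Radon measure ζ on ℝ such that for every t ∈ ℝ and every f ∈ B(E)^+ the atomless part of G_t(f,·) is absolutely continuous with respect to ζ. -/

import Mathlib

open MeasureTheory ProbabilityTheory Filter Topology
open scoped ENNReal NNReal
set_option linter.unusedSectionVars false
set_option linter.unusedVariables false
set_option maxHeartbeats 1000000

noncomputable section

variable {E : Type*} [TopologicalSpace E] [MeasurableSpace E] [BorelSpace E]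
  [StandardBorelSpace E]

/-- The Borel σ-algebra of the topology of weak convergence on `M(E)`. -/
instance : MeasurableSpace (FiniteMeasure E) := borel _

/-- `B(E)^+`: bounded non-negative Borel functions on `E`. -/
def Bp (f : E → ℝ) : Prop :=
  Measurable f ∧ (∀ x, 0 ≤ f x) ∧ ∃ C, ∀ x, f x ≤ C

/-- The Laplace functional `L_F(f) = ∫_{M(E)} e^{-ν(f)} F(dν)`. -/
def lap (F : Measure (FiniteMeasure E)) (f : E → ℝ) : ℝ :=
  ∫ ν, Real.exp (- ∫ x, f x ∂(ν : Measure E)) ∂F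

/-- Convolution of two measures on `M(E)`: the image of `F ⊗ G` under `(μ, ν) ↦ μ + ν`. -/
def conv (F G : Measure (FiniteMeasure E)) : Measure (FiniteMeasure E) :=
  (F.prod G).map (fun p => p.1 + p.2)

/-- The functional `J_{r,t}(f) = -log L_{N_{r,t}}(f)`. -/
def Jfun (N : ℝ → ℝ → Measure (FiniteMeasure E)) (r t : ℝ) (f : E → ℝ) : ℝ :=
  - Real.log (lap (N r t) f)

/-- The atomless (diffuse) part of a measure on `ℝ`: its restriction to the set of
non-atoms. -/
def atomlessPart (μ : Measure ℝ) : Measure ℝ :=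
  μ.restrict {x | μ {x} = 0}

def fmDirac (x : E) : FiniteMeasure E := ⟨Measure.dirac x, inferInstance⟩
lemma fmDirac_coe (x : E) : ((fmDirac x : FiniteMeasure E) : Measure E) = Measure.dirac x := rfl

lemma expI_le_one' {f : E → ℝ} (hf : Bp f) (ν : FiniteMeasure E) :
    Real.exp (- ∫ x, f x ∂(ν : Measure E)) ≤ 1 := by
  rw [Real.exp_le_one_iff, neg_nonpos]
  exact integral_nonneg hf.2.1

lemma bp_integrable {f : E → ℝ} (hf : Bp f) (μ : Measure E) [IsFiniteMeasure μ] :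
    Integrable f μ := by
  obtain ⟨hm, hnn, C, hC⟩ := hf
  refine (integrable_const C).mono' hm.aestronglyMeasurable ?_
  exact Filter.Eventually.of_forall fun x => by
    rw [Real.norm_eq_abs, abs_of_nonneg (hnn x)]; exact hC x

lemma expI_le_one {f : E → ℝ} (hf : Bp f) (ν : FiniteMeasure E) :
    Real.exp (- ∫ x, f x ∂(ν : Measure E)) ≤ 1 := by
  rw [Real.exp_le_one_iff, neg_nonpos]
  exact integral_nonneg hf.2.1

lemma integrable_of_lap_ne {F : Measure (FiniteMeasure E)} {f : E → ℝ}
    (hne : lap F f ≠ 0) :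
    Integrable (fun ν : FiniteMeasure E => Real.exp (- ∫ x, f x ∂(ν : Measure E))) F := by
  by_contra h
  exact hne (integral_undef h)


lemma lap_le_one {F : Measure (FiniteMeasure E)} [IsProbabilityMeasure F] {f : E → ℝ}
    (hf : Bp f) (hne : lap F f ≠ 0) : lap F f ≤ 1 := by
  have := integral_mono (integrable_of_lap_ne hne) (integrable_const 1)
    (fun ν => expI_le_one hf ν)
  simpa [lap] using this

lemma lap_mono {F : Measure (FiniteMeasure E)} {f g : E → ℝ}
    (hf : Bp f) (hg : Bp g) (hfg : ∀ x, f x ≤ g x)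
    (hnef : lap F f ≠ 0) (hneg : lap F g ≠ 0) : lap F g ≤ lap F f := by
  refine integral_mono (integrable_of_lap_ne hneg) (integrable_of_lap_ne hnef) fun ν => ?_
  have : IsFiniteMeasure (ν : Measure E) := ν.2
  exact Real.exp_le_exp.2 (neg_le_neg (integral_mono (bp_integrable hf _) (bp_integrable hg _) hfg))

-- lintegral expression for lap when lap ≠ 0
lemma lap_lintegral {F : Measure (FiniteMeasure E)} {f : E → ℝ}
    (hne : lap F f ≠ 0) :
    ∫⁻ ν, ENNReal.ofReal (Real.exp (- ∫ x, f x ∂(ν : Measure E))) ∂F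
      = ENNReal.ofReal (lap F f) := by
  rw [lap, integral_eq_lintegral_of_nonneg_ae
    (Filter.Eventually.of_forall fun ν => (Real.exp_pos _).le)
    (integrable_of_lap_ne hne).aestronglyMeasurable]
  rw [ENNReal.ofReal_toReal]
  have hint := integrable_of_lap_ne hne
  exact (hasFiniteIntegral_iff_ofReal
    (Filter.Eventually.of_forall fun ν => (Real.exp_pos _).le)).1 hint.2 |>.ne

lemma lap_split
    (Q : ℝ → ℝ → Kernel (FiniteMeasure E) (FiniteMeasure E))
    (V : ℝ → ℝ → (E → ℝ) → E → ℝ)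
    (hQmar : ∀ r t, r ≤ t → IsMarkovKernel (Q r t))
    (hVBp : ∀ r t f, r ≤ t → Bp f → Bp (V r t f))
    (hQlap : ∀ r t, r ≤ t → ∀ (μ : FiniteMeasure E) f, Bp f →
      lap ((Q r t) μ) f = Real.exp (- ∫ x, V r t f x ∂(μ : Measure E)))
    (N : ℝ → ℝ → Measure (FiniteMeasure E))
    (hN : ∀ r t, r ≤ t → IsProbabilityMeasure (N r t))
    (hpos : ∀ r t f, r ≤ t → Bp f → 0 < lap (N r t) f)
    (hSCS : ∀ r s t, r ≤ s → s ≤ t → N r t = conv ((N r s).bind (Q s t ·)) (N s t))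
    {r s t : ℝ} (hrs : r ≤ s) (hst : s ≤ t) {f : E → ℝ} (hf : Bp f) :
    lap (N r t) f = lap (N r s) (V s t f) * lap (N s t) f := by
  classical
  haveI := hN r s hrs
  haveI := hN s t hst
  haveI := hN r t (hrs.trans hst)
  haveI := hQmar s t hst
  set h : FiniteMeasure E → ℝ := fun ν => Real.exp (- ∫ x, f x ∂(ν : Measure E)) with hh
  set F : Measure (FiniteMeasure E) := (N r s).bind (Q s t ·) with hF
  have hProbF : IsProbabilityMeasure F := by
    constructor
    rw [hF, Measure.bind_apply MeasurableSet.univ (Q s t).measurable.aemeasurable]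
    simp [measure_univ]
  haveI := hProbF
  have key : N r t = conv F (N s t) := hSCS r s t hrs hst
  have hInt : Integrable h (N r t) := integrable_of_lap_ne (hpos r t f (hrs.trans hst) hf).ne'
  -- a.e.-measurability of addition
  have hadd : AEMeasurable (fun p : FiniteMeasure E × FiniteMeasure E => p.1 + p.2)
      (F.prod (N s t)) := by
    by_contra hcon
    have : conv F (N s t) = 0 := by
      rw [conv, Measure.map_of_not_aemeasurable hcon]
    have h1 : (N r t) Set.univ = 1 := measure_univ
    rw [key, this] at h1
    simp at h1
  -- step 1: integral over product
  have step1 : lap (N r t) f = ∫ p : FiniteMeasure E × FiniteMeasure E,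
      h p.1 * h p.2 ∂(F.prod (N s t)) := by
    have hsm : AEStronglyMeasurable h ((F.prod (N s t)).map
        (fun p : FiniteMeasure E × FiniteMeasure E => p.1 + p.2)) := by
      have := hInt.aestronglyMeasurable
      rwa [key, conv] at this
    have : lap (N r t) f = ∫ p : FiniteMeasure E × FiniteMeasure E,
        h (p.1 + p.2) ∂(F.prod (N s t)) := by
      rw [lap]
      rw [key, conv, integral_map hadd hsm]
    rw [this]
    congr 1
    funext p
    have hco : ((p.1 + p.2 : FiniteMeasure E) : Measure E) = (p.1 : Measure E) + (p.2 : Measure E) :=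
      FiniteMeasure.toMeasure_add _ _
    have : IsFiniteMeasure (p.1 : Measure E) := p.1.2
    have : IsFiniteMeasure (p.2 : Measure E) := p.2.2
    simp only [hh, hco, integral_add_measure (bp_integrable hf _) (bp_integrable hf _),
      neg_add, Real.exp_add]
  have step2 : lap (N r t) f = (∫ ν, h ν ∂F) * lap (N s t) f := by
    rw [step1, lap, ← hh]
    exact integral_prod_mul h h
  -- ∫ h dF is positive hence integrable
  have hFne : (∫ ν, h ν ∂F) ≠ 0 := by
    intro h0
    rw [h0, zero_mul] at step2
    exact (hpos r t f (hrs.trans hst) hf).ne' step2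
  have hIntF : Integrable h F := by
    by_contra hc
    exact hFne (integral_undef hc)
  -- now compute ∫ h dF
  have hBpV : Bp (V s t f) := hVBp s t f hst hf
  have hlapV : 0 < lap (N r s) (V s t f) := hpos r s (V s t f) hrs hBpV
  have hmain : (∫ ν, h ν ∂F) = lap (N r s) (V s t f) := by
    -- measurable modification of h
    have hAE := hIntF.aestronglyMeasurable
    set h' : FiniteMeasure E → ℝ := hAE.mk h with hh'
    have h'sm : StronglyMeasurable h' := hAE.stronglyMeasurable_mk
    set h'' : FiniteMeasure E → ℝ := fun ν => max 0 (min (h' ν) 1) with hh''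
    have h''m : Measurable h'' :=
      (measurable_const.max ((h'sm.measurable).min measurable_const)).comp measurable_id |>.mono
        le_rfl le_rfl
    have h''eq : ∀ᵐ ν ∂F, h ν = h'' ν := by
      filter_upwards [hAE.ae_eq_mk] with ν hν
      have h1 : 0 < h ν := Real.exp_pos _
      have h2 : h ν ≤ 1 := expI_le_one hf ν
      have heq : h' ν = h ν := by rw [hh', ← hν]
      show h ν = 0 ⊔ h' ν ⊓ 1
      rw [heq, min_eq_left h2, max_eq_right h1.le]
    have h''nn : ∀ ν, 0 ≤ h'' ν := fun ν => le_max_left _ _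
    -- null set transfer to kernels
    obtain ⟨D, hDsub, hDm, hD0⟩ :=
      exists_measurable_superset_of_null (ae_iff.1 h''eq)
    have hbind : ∀ᵐ ν ∂(N r s), (Q s t) ν D = 0 := by
      have : F D = 0 := hD0
      rw [hF, Measure.bind_apply hDm (Q s t).measurable.aemeasurable] at this
      exact (lintegral_eq_zero_iff ((Q s t).measurable_coe hDm)).1 this
    -- main lintegral computation
    have hlb : ∫⁻ ν, ENNReal.ofReal (h'' ν) ∂F
        = ∫⁻ ν, ∫⁻ μ', ENNReal.ofReal (h'' μ') ∂((Q s t) ν) ∂(N r s) := by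
      rw [hF]
      exact Measure.lintegral_bind (Q s t).measurable.aemeasurable
        (ENNReal.measurable_ofReal.comp h''m).aemeasurable
    have hinner : ∀ᵐ ν ∂(N r s), (∫⁻ μ', ENNReal.ofReal (h'' μ') ∂((Q s t) ν))
        = ENNReal.ofReal (Real.exp (- ∫ x, V s t f x ∂(ν : Measure E))) := by
      filter_upwards [hbind] with ν hν
      have haeQ : ∀ᵐ μ' ∂((Q s t) ν), h μ' = h'' μ' := by
        rw [ae_iff]
        exact measure_mono_null hDsub hν
      have h1 : ∫⁻ μ', ENNReal.ofReal (h'' μ') ∂((Q s t) ν)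
          = ∫⁻ μ', ENNReal.ofReal (h μ') ∂((Q s t) ν) := by
        refine lintegral_congr_ae ?_
        filter_upwards [haeQ] with μ' hμ'
        rw [hμ']
      have hlapQ : lap ((Q s t) ν) f = Real.exp (- ∫ x, V s t f x ∂(ν : Measure E)) :=
        hQlap s t hst ν f hf
      have h2 : ∫⁻ μ', ENNReal.ofReal (h μ') ∂((Q s t) ν)
          = ENNReal.ofReal (lap ((Q s t) ν) f) := by
        rw [hh]
        exact lap_lintegral (by rw [hlapQ]; exact (Real.exp_pos _).ne')
      rw [h1, h2, hlapQ]
    have houter : ∫⁻ ν, ENNReal.ofReal (h'' ν) ∂F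
        = ENNReal.ofReal (lap (N r s) (V s t f)) := by
      rw [hlb, lintegral_congr_ae hinner]
      exact lap_lintegral hlapV.ne'
    calc (∫ ν, h ν ∂F) = ∫ ν, h'' ν ∂F := integral_congr_ae h''eq
      _ = (∫⁻ ν, ENNReal.ofReal (h'' ν) ∂F).toReal :=
          integral_eq_lintegral_of_nonneg_ae (Filter.Eventually.of_forall h''nn)
            h''m.aestronglyMeasurable
      _ = lap (N r s) (V s t f) := by rw [houter, ENNReal.toReal_ofReal hlapV.le]
  rw [step2, hmain]

def SupJ (N : ℝ → ℝ → Measure (FiniteMeasure E)) (t : ℝ) (f : E → ℝ) (r : ℝ) : ℝ :=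
  ⨆ u : (Set.Ioc r t : Set ℝ), Jfun N (u : ℝ) t f

variable {N : ℝ → ℝ → Measure (FiniteMeasure E)} {t : ℝ} {f : E → ℝ}

section SupJ
variable (hJnn : ∀ r, r ≤ t → 0 ≤ Jfun N r t f)
  (hJanti : ∀ r r', r ≤ r' → r' ≤ t → Jfun N r' t f ≤ Jfun N r t f)

lemma SupJ_of_ge (h : t ≤ r) : SupJ N t f r = 0 := by
  have : IsEmpty (Set.Ioc r t : Set ℝ) := by
    rw [Set.isEmpty_coe_sort, Set.Ioc_eq_empty h.not_gt]
  exact Real.iSup_of_isEmpty _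

include hJanti in
lemma SupJ_bdd (hrt : r < t) :
    BddAbove (Set.range fun u : (Set.Ioc r t : Set ℝ) => Jfun N (u : ℝ) t f) := by
  refine ⟨Jfun N r t f, ?_⟩
  rintro x ⟨u, rfl⟩
  exact hJanti r u u.2.1.le u.2.2

include hJanti in
lemma le_SupJ {u : ℝ} (hu : u ∈ Set.Ioc r t) : Jfun N u t f ≤ SupJ N t f r :=
  le_ciSup (SupJ_bdd hJanti (lt_of_lt_of_le hu.1 hu.2)) ⟨u, hu⟩

lemma SupJ_le {M : ℝ} (hrt : r < t) (h : ∀ u ∈ Set.Ioc r t, Jfun N u t f ≤ M) :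
    SupJ N t f r ≤ M := by
  have : Nonempty (Set.Ioc r t : Set ℝ) := Set.Nonempty.to_subtype (Set.nonempty_Ioc.2 hrt)
  exact ciSup_le fun u => h u u.2

include hJnn hJanti in
lemma SupJ_nonneg (r : ℝ) : 0 ≤ SupJ N t f r := by
  rcases lt_or_ge r t with h | h
  · exact le_trans (hJnn t le_rfl) (le_SupJ hJanti ⟨h, le_rfl⟩)
  · rw [SupJ_of_ge h]

include hJnn hJanti in
lemma SupJ_anti : Antitone (SupJ N t f) := by
  intro r r' hrr'
  rcases lt_or_ge r' t with h | h
  · exact SupJ_le h fun u hu =>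
      le_SupJ hJanti ⟨lt_of_le_of_lt hrr' hu.1, hu.2⟩
  · rw [SupJ_of_ge h]; exact SupJ_nonneg hJnn hJanti r

include hJanti in
lemma SupJ_le_J (hrt : r < t) : SupJ N t f r ≤ Jfun N r t f :=
  SupJ_le hrt fun u hu => hJanti r u hu.1.le hu.2

lemma exists_SupJ_near (hrt : r < t) {ε : ℝ} (hε : 0 < ε) :
    ∃ u ∈ Set.Ioc r t, SupJ N t f r - ε < Jfun N u t f := by
  have hne : Nonempty (Set.Ioc r t : Set ℝ) := Set.Nonempty.to_subtype (Set.nonempty_Ioc.2 hrt)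
  obtain ⟨u, hu⟩ := exists_lt_of_lt_ciSup (show SupJ N t f r - ε < SupJ N t f r by linarith)
  exact ⟨u, u.2, hu⟩
end SupJ

lemma V_mono
    (Q : ℝ → ℝ → Kernel (FiniteMeasure E) (FiniteMeasure E))
    (V : ℝ → ℝ → (E → ℝ) → E → ℝ)
    (hVBp : ∀ r t f, r ≤ t → Bp f → Bp (V r t f))
    (hQlap : ∀ r t, r ≤ t → ∀ (μ : FiniteMeasure E) f, Bp f →
      lap ((Q r t) μ) f = Real.exp (- ∫ x, V r t f x ∂(μ : Measure E)))
    {r t : ℝ} (hrt : r ≤ t) {f g : E → ℝ} (hf : Bp f) (hg : Bp g)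
    (hfg : ∀ x, f x ≤ g x) : ∀ x, V r t f x ≤ V r t g x := by
  intro x
  have hVf := hQlap r t hrt (fmDirac x) f hf
  have hVg := hQlap r t hrt (fmDirac x) g hg
  rw [fmDirac_coe, integral_dirac' _ x (hVBp r t f hrt hf).1.stronglyMeasurable] at hVf
  rw [fmDirac_coe, integral_dirac' _ x (hVBp r t g hrt hg).1.stronglyMeasurable] at hVg
  have hle : lap ((Q r t) (fmDirac x)) g ≤ lap ((Q r t) (fmDirac x)) f := by
    refine lap_mono hf hg hfg ?_ ?_
    · rw [hVf]; exact (Real.exp_pos _).ne'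
    · rw [hVg]; exact (Real.exp_pos _).ne'
  rw [hVf, hVg] at hle
  have := Real.exp_le_exp.1 hle
  linarith

section Jlemmas
variable
    {Q : ℝ → ℝ → Kernel (FiniteMeasure E) (FiniteMeasure E)}
    {V : ℝ → ℝ → (E → ℝ) → E → ℝ}
    {N : ℝ → ℝ → Measure (FiniteMeasure E)}
    (hQmar : ∀ r t, r ≤ t → IsMarkovKernel (Q r t))
    (hVBp : ∀ r t f, r ≤ t → Bp f → Bp (V r t f))
    (hQlap : ∀ r t, r ≤ t → ∀ (μ : FiniteMeasure E) f, Bp f →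
      lap ((Q r t) μ) f = Real.exp (- ∫ x, V r t f x ∂(μ : Measure E)))
    (hN : ∀ r t, r ≤ t → IsProbabilityMeasure (N r t))
    (hpos : ∀ r t f, r ≤ t → Bp f → 0 < lap (N r t) f)
    (hSCS : ∀ r s t, r ≤ s → s ≤ t → N r t = conv ((N r s).bind (Q s t ·)) (N s t))

include hQmar hVBp hQlap hN hpos hSCS

lemma J_split {r s t : ℝ} (hrs : r ≤ s) (hst : s ≤ t) {f : E → ℝ} (hf : Bp f) :
    Jfun N r t f = Jfun N r s (V s t f) + Jfun N s t f := by
  have h := lap_split Q V hQmar hVBp hQlap N hN hpos hSCS hrs hst hf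
  rw [Jfun, Jfun, Jfun, h,
    Real.log_mul (hpos r s (V s t f) hrs (hVBp s t f hst hf)).ne' (hpos s t f hst hf).ne']
  ring

omit hQmar hVBp hQlap hSCS in
lemma J_nonneg {r t : ℝ} (hrt : r ≤ t) {f : E → ℝ} (hf : Bp f) : 0 ≤ Jfun N r t f := by
  haveI := hN r t hrt
  have h1 := hpos r t f hrt hf
  have h2 : lap (N r t) f ≤ 1 := lap_le_one hf h1.ne'
  rw [Jfun, neg_nonneg]
  exact Real.log_nonpos h1.le h2

omit hQmar hVBp hQlap hSCS in
lemma J_mono_f {r t : ℝ} (hrt : r ≤ t) {f g : E → ℝ} (hf : Bp f) (hg : Bp g)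
    (hfg : ∀ x, f x ≤ g x) : Jfun N r t f ≤ Jfun N r t g := by
  have h1 := hpos r t f hrt hf
  have h2 := hpos r t g hrt hg
  have := lap_mono hf hg hfg h1.ne' h2.ne'
  rw [Jfun, Jfun, neg_le_neg_iff]
  exact Real.log_le_log h2 this

lemma J_anti {r r' t : ℝ} (hrr' : r ≤ r') (hr't : r' ≤ t) {f : E → ℝ} (hf : Bp f) :
    Jfun N r' t f ≤ Jfun N r t f := by
  rw [J_split hQmar hVBp hQlap hN hpos hSCS hrr' hr't hf]
  have := J_nonneg hN hpos (t := r') hrr' (hVBp r' t f hr't hf)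
  linarith

-- transfer of SupJ from horizon t to horizon q
lemma SupJ_split {r q t : ℝ} (hrq : r < q) (hqt : q < t) {f : E → ℝ} (hf : Bp f) :
    SupJ N t f r = SupJ N q (V q t f) r + Jfun N q t f := by
  have hBg : Bp (V q t f) := hVBp q t f hqt.le hf
  have hJs : ∀ u, u ≤ q → Jfun N u t f = Jfun N u q (V q t f) + Jfun N q t f :=
    fun u hu => J_split hQmar hVBp hQlap hN hpos hSCS hu hqt.le hf
  have hanti : ∀ a b, a ≤ b → b ≤ t → Jfun N b t f ≤ Jfun N a t f :=
    fun a b hab hbt => J_anti hQmar hVBp hQlap hN hpos hSCS hab hbt hf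
  have hantiq : ∀ a b, a ≤ b → b ≤ q → Jfun N b q (V q t f) ≤ Jfun N a q (V q t f) :=
    fun a b hab hbq => J_anti hQmar hVBp hQlap hN hpos hSCS hab hbq hBg
  refine le_antisymm ?_ ?_
  · refine SupJ_le (hrq.trans hqt) fun u hu => ?_
    rcases le_or_gt u q with huq | huq
    · rw [hJs u huq]
      have : Jfun N u q (V q t f) ≤ SupJ N q (V q t f) r := le_SupJ hantiq ⟨hu.1, huq⟩
      linarith
    · have h1 : Jfun N u t f ≤ Jfun N q t f := hanti q u huq.le hu.2
      have h2 : 0 ≤ SupJ N q (V q t f) r :=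
        SupJ_nonneg (fun a haq => J_nonneg hN hpos haq hBg) hantiq r
      linarith
  · have : SupJ N q (V q t f) r ≤ SupJ N t f r - Jfun N q t f := by
      refine SupJ_le hrq fun u hu => ?_
      have h1 : Jfun N u t f ≤ SupJ N t f r := le_SupJ hanti ⟨hu.1, hu.2.trans hqt.le⟩
      have := hJs u hu.2
      linarith
    linarith

-- pointwise comparison of SupJ in the function argument
omit hSCS hQmar hVBp hQlap in
lemma SupJ_mono_f {q r : ℝ} {g m : E → ℝ} (hg : Bp g) (hm : Bp m)
    (hgm : ∀ x, g x ≤ m x)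
    (hantim : ∀ a b, a ≤ b → b ≤ q → Jfun N b q m ≤ Jfun N a q m) :
    SupJ N q g r ≤ SupJ N q m r := by
  rcases lt_or_ge r q with h | h
  · refine SupJ_le h fun u hu => ?_
    exact le_trans (J_mono_f hN hpos hu.2 hg hm hgm) (le_SupJ hantim hu)
  · rw [SupJ_of_ge h, SupJ_of_ge h]

-- increment comparison
lemma SupJ_incr {q r s : ℝ} (hrs : r ≤ s) (hsq : s < q) {g m : E → ℝ}
    (hg : Bp g) (hm : Bp m) (hgm : ∀ x, g x ≤ m x) :
    SupJ N q g r - SupJ N q g s ≤ SupJ N q m r - SupJ N q m s := by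
  have hantig : ∀ a b, a ≤ b → b ≤ q → Jfun N b q g ≤ Jfun N a q g :=
    fun a b hab hbq => J_anti hQmar hVBp hQlap hN hpos hSCS hab hbq hg
  have hantim : ∀ a b, a ≤ b → b ≤ q → Jfun N b q m ≤ Jfun N a q m :=
    fun a b hab hbq => J_anti hQmar hVBp hQlap hN hpos hSCS hab hbq hm
  have hrq : r < q := lt_of_le_of_lt hrs hsq
  refine sub_le_iff_le_add.2 (le_of_forall_pos_le_add fun ε hε => ?_)
  obtain ⟨δ, hδpos, hδε⟩ : ∃ δ : ℝ, 0 < δ ∧ δ + δ = ε := ⟨ε / 2, half_pos hε, by ring⟩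
  obtain ⟨u₁, hu₁, hJu₁⟩ := exists_SupJ_near (f := g) hrq hδpos
  obtain ⟨u₂, hu₂, hJu₂⟩ := exists_SupJ_near (f := m) hsq hδpos
  set w := min u₁ u₂ with hw
  have hwq : w ≤ q := le_trans (min_le_left _ _) hu₁.2
  have hrw : r < w := lt_min hu₁.1 (lt_of_le_of_lt hrs hu₂.1)
  have hwu₂ : w ≤ u₂ := min_le_right _ _
  have hwu₁ : w ≤ u₁ := min_le_left _ _
  -- increment inequality at (w, u₂)
  have hVmono := V_mono Q V hVBp hQlap hu₂.2 hg hm hgm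
  have hsplg := J_split hQmar hVBp hQlap hN hpos hSCS hwu₂ hu₂.2 hg
  have hsplm := J_split hQmar hVBp hQlap hN hpos hSCS hwu₂ hu₂.2 hm
  have hVle : Jfun N w u₂ (V u₂ q g) ≤ Jfun N w u₂ (V u₂ q m) :=
    J_mono_f hN hpos hwu₂ (hVBp u₂ q g hu₂.2 hg) (hVBp u₂ q m hu₂.2 hm) hVmono
  have hkey : Jfun N w q g - Jfun N u₂ q g ≤ Jfun N w q m - Jfun N u₂ q m := by
    rw [hsplg, hsplm]; linarith
  have h1 : SupJ N q g r - δ < Jfun N w q g :=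
    lt_of_lt_of_le hJu₁ (hantig w u₁ hwu₁ hu₁.2)
  have h2 : Jfun N u₂ q g ≤ SupJ N q g s := le_SupJ hantig hu₂
  have h3 : Jfun N w q m ≤ SupJ N q m r := le_SupJ hantim ⟨hrw, hwq⟩
  have h4 : SupJ N q m s - δ < Jfun N u₂ q m := hJu₂
  linarith
end Jlemmas

section Stieltjes
open Set

variable {N : ℝ → ℝ → Measure (FiniteMeasure E)} {q : ℝ} {g : E → ℝ}
variable (hJnn : ∀ r, r ≤ q → 0 ≤ Jfun N r q g)
  (hJanti : ∀ r r', r ≤ r' → r' ≤ q → Jfun N r' q g ≤ Jfun N r q g)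

include hJnn hJanti in
lemma SupJ_right_cont :
    ∀ x, ContinuousWithinAt (fun r => -(SupJ N q g r)) (Set.Ici x) x := by
  intro x
  set φ : ℝ → ℝ := fun r => -(SupJ N q g r) with hφ
  have hmono : Monotone φ := fun a b hab => neg_le_neg (SupJ_anti hJnn hJanti hab)
  rw [← continuousWithinAt_Ioi_iff_Ici]
  have htend := hmono.tendsto_nhdsGT x
  have hinf : sInf (φ '' Set.Ioi x) = φ x := by
    refine le_antisymm ?_ ?_
    · refine le_of_forall_pos_le_add fun ε hε => ?_
      have hbdd : BddBelow (φ '' Set.Ioi x) :=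
        ⟨φ x, by rintro y ⟨z, hz, rfl⟩; exact hmono hz.le⟩
      rcases le_or_gt q x with hqx | hxq
      · have : φ (x + 1) = 0 := by
          rw [hφ]; simp only; rw [SupJ_of_ge (hqx.trans (by linarith)), neg_zero]
        have h0 : φ x = 0 := by
          rw [hφ]; simp only; rw [SupJ_of_ge hqx, neg_zero]
        calc sInf (φ '' Set.Ioi x) ≤ φ (x + 1) :=
              csInf_le hbdd ⟨x + 1, by simp, rfl⟩
          _ ≤ φ x + ε := by rw [this, h0]; linarith
      · obtain ⟨u, hu, hJu⟩ := exists_SupJ_near (N := N) (f := g) hxq hε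
        set y := (x + u) / 2 with hy
        have hxy : x < y := by rw [hy]; linarith [hu.1]
        have hyu : y < u := by rw [hy]; linarith [hu.1]
        have hySup : SupJ N q g x - ε < SupJ N q g y :=
          lt_of_lt_of_le hJu (le_SupJ hJanti ⟨hyu, hu.2⟩)
        calc sInf (φ '' Set.Ioi x) ≤ φ y := csInf_le hbdd ⟨y, hxy, rfl⟩
          _ ≤ φ x + ε := by rw [hφ]; simp only; linarith
    · refine le_csInf ⟨φ (x + 1), ⟨x + 1, by simp, rfl⟩⟩ ?_
      rintro y ⟨z, hz, rfl⟩
      exact hmono hz.le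
  rw [ContinuousWithinAt, ← hinf]
  exact htend
end Stieltjes

lemma st_atoms_countable (φ : StieltjesFunction ℝ) :
    Set.Countable {x | φ.measure {x} ≠ 0} := by
  refine Set.Countable.mono ?_ φ.mono.countable_not_continuousAt
  intro x hx
  simp only [Set.mem_setOf_eq] at hx ⊢
  intro hcont
  apply hx
  rw [φ.measure_singleton]
  have : Function.leftLim φ x = φ x :=
    leftLim_eq_of_tendsto
      (hcont.continuousWithinAt.tendsto)
  rw [this, sub_self, ENNReal.ofReal_zero]

-- abstract window lemma
lemma meas_eq_on_Ioo {μ ν : Measure ℝ} {q' q : ℝ}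
    (hμ : μ (Set.Ioo q' q) ≠ ⊤)
    (h : ∀ a b, q' ≤ a → a ≤ b → b < q → μ (Set.Ioc a b) = ν (Set.Ioc a b)) :
    ∀ X, MeasurableSet X → X ⊆ Set.Ioo q' q → μ X = ν X := by
  have hIoo : ∀ a', q' ≤ a' → μ (Set.Ioo a' q) = ν (Set.Ioo a' q) := by
    intro a' hq'a'
    rcases le_or_gt q a' with hqa' | ha'q
    · rw [Set.Ioo_eq_empty hqa'.not_gt]; simp
    · set c : ℕ → ℝ := fun n => q - (q - a') / (n + 1) with hc
      have hcb : ∀ n : ℕ, a' ≤ c n ∧ c n < q := by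
        intro n
        have h1 : (0:ℝ) < (n:ℝ) + 1 := by positivity
        have h2 : (0:ℝ) < q - a' := by linarith
        constructor
        · rw [hc]
          simp only
          have : (q - a') / ((n:ℝ) + 1) ≤ (q - a') / 1 := by
            apply div_le_div_of_nonneg_left h2.le one_pos
            linarith
          linarith
        · rw [hc]
          simp only
          have : 0 < (q - a') / ((n:ℝ) + 1) := div_pos h2 h1
          linarith
      have hcmono : Monotone fun n : ℕ => Set.Ioc a' (c n) := by
        intro i j hij
        apply Set.Ioc_subset_Ioc_right
        rw [hc]
        simp only
        have h2 : (0:ℝ) < q - a' := by linarith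
        have h3 : (i:ℝ) + 1 ≤ (j:ℝ) + 1 := by
          have := (Nat.cast_le (α := ℝ)).2 hij
          linarith
        have := div_le_div_of_nonneg_left h2.le (by positivity : (0:ℝ) < (i:ℝ) + 1) h3
        linarith
      have hunion : (⋃ n : ℕ, Set.Ioc a' (c n)) = Set.Ioo a' q := by
        ext x
        simp only [Set.mem_iUnion, Set.mem_Ioc, Set.mem_Ioo]
        constructor
        · rintro ⟨n, h1, h2⟩
          exact ⟨h1, lt_of_le_of_lt h2 (hcb n).2⟩
        · rintro ⟨h1, h2⟩
          have hqx : (0:ℝ) < q - x := by linarith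
          obtain ⟨n, hn⟩ := exists_nat_gt ((q - a') / (q - x))
          refine ⟨n, h1, ?_⟩
          rw [hc]
          simp only
          have hq2 : (q - a') / ((n:ℝ) + 1) < q - x := by
            rw [div_lt_iff₀ (by positivity : (0:ℝ) < (n:ℝ) + 1)] at *
            have h4 : (q - a') / (q - x) < (n:ℝ) + 1 := by linarith
            rw [div_lt_iff₀ hqx] at h4
            nlinarith
          linarith
      rw [← hunion, hcmono.directed_le.measure_iUnion,
        hcmono.directed_le.measure_iUnion]
      refine iSup_congr fun n => ?_
      exact h a' (c n) hq'a' (hcb n).1 (hcb n).2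
  -- restricted measures agree on Ioc, hence equal
  haveI hfin : IsFiniteMeasure (μ.restrict (Set.Ioo q' q)) := by
    constructor
    rw [Measure.restrict_apply MeasurableSet.univ, Set.univ_inter]
    exact lt_of_le_of_ne le_top hμ
  have hres : μ.restrict (Set.Ioo q' q) = ν.restrict (Set.Ioo q' q) := by
    refine MeasureTheory.Measure.ext_of_Ioc _ _ fun a b hab => ?_
    rw [Measure.restrict_apply measurableSet_Ioc, Measure.restrict_apply measurableSet_Ioc]
    set a' := max a q' with ha'
    have hq'a' : q' ≤ a' := le_max_right _ _
    rcases lt_or_ge b q with hbq | hqb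
    · have hset : Set.Ioc a b ∩ Set.Ioo q' q = Set.Ioc a' b := by
        ext x
        simp only [Set.mem_inter_iff, Set.mem_Ioc, Set.mem_Ioo, ha', max_lt_iff]
        constructor
        · rintro ⟨⟨h1, h2⟩, h3, h4⟩; exact ⟨⟨h1, h3⟩, h2⟩
        · rintro ⟨⟨h1, h3⟩, h2⟩; exact ⟨⟨h1, h2⟩, h3, lt_of_le_of_lt h2 hbq⟩
      rw [hset]
      rcases le_or_gt a' b with hab' | hba'
      · exact h a' b hq'a' hab' hbq
      · rw [Set.Ioc_eq_empty (not_lt.2 hba'.le)]; simp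
    · have hset : Set.Ioc a b ∩ Set.Ioo q' q = Set.Ioo a' q := by
        ext x
        simp only [Set.mem_inter_iff, Set.mem_Ioc, Set.mem_Ioo, ha', max_lt_iff]
        constructor
        · rintro ⟨⟨h1, h2⟩, h3, h4⟩; exact ⟨⟨h1, h3⟩, h4⟩
        · rintro ⟨⟨h1, h3⟩, h4⟩; exact ⟨⟨h1, le_trans h4.le hqb⟩, h3, h4⟩
      rw [hset]
      exact hIoo a' hq'a'
  intro X hX hXsub
  have h1 : μ X = μ.restrict (Set.Ioo q' q) X := by
    rw [Measure.restrict_apply hX, Set.inter_eq_self_of_subset_left hXsub]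
  have h2 : ν X = ν.restrict (Set.Ioo q' q) X := by
    rw [Measure.restrict_apply hX, Set.inter_eq_self_of_subset_left hXsub]
  rw [h1, h2, hres]

def phiSt (N : ℝ → ℝ → Measure (FiniteMeasure E)) (q : ℝ) (g : E → ℝ)
    (hJnn : ∀ r, r ≤ q → 0 ≤ Jfun N r q g)
    (hJanti : ∀ r r', r ≤ r' → r' ≤ q → Jfun N r' q g ≤ Jfun N r q g) :
    StieltjesFunction ℝ where
  toFun := fun r => -(SupJ N q g r)
  mono' := fun a b hab => neg_le_neg (SupJ_anti hJnn hJanti hab)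
  right_continuous' := SupJ_right_cont hJnn hJanti

@[simp] lemma phiSt_apply {N : ℝ → ℝ → Measure (FiniteMeasure E)} {q : ℝ} {g : E → ℝ}
    {h1 : ∀ r, r ≤ q → 0 ≤ Jfun N r q g}
    {h2 : ∀ r r', r ≤ r' → r' ≤ q → Jfun N r' q g ≤ Jfun N r q g} (x : ℝ) :
    phiSt N q g h1 h2 x = -(SupJ N q g x) := rfl

lemma phiSt_measure_Ioc {N : ℝ → ℝ → Measure (FiniteMeasure E)} {q : ℝ} {g : E → ℝ}
    {h1 : ∀ r, r ≤ q → 0 ≤ Jfun N r q g}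
    {h2 : ∀ r r', r ≤ r' → r' ≤ q → Jfun N r' q g ≤ Jfun N r q g} (a b : ℝ) :
    (phiSt N q g h1 h2).measure (Set.Ioc a b)
      = ENNReal.ofReal (SupJ N q g a - SupJ N q g b) := by
  rw [StieltjesFunction.measure_Ioc]
  congr 1
  simp only [phiSt_apply]
  ring

-- window comparison: a measure agreeing with the Stieltjes increments on small Iocs
lemma G_window {N : ℝ → ℝ → Measure (FiniteMeasure E)} {q' q : ℝ} {g : E → ℝ}
    {h1 : ∀ r, r ≤ q → 0 ≤ Jfun N r q g}
    {h2 : ∀ r r', r ≤ r' → r' ≤ q → Jfun N r' q g ≤ Jfun N r q g}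
    (Gt : Measure ℝ) (hfin : Gt (Set.Ioo q' q) ≠ ⊤)
    (hIoc : ∀ a b, q' ≤ a → a ≤ b → b < q →
      Gt (Set.Ioc a b) = ENNReal.ofReal (SupJ N q g a - SupJ N q g b)) :
    ∀ X, MeasurableSet X → X ⊆ Set.Ioo q' q →
      Gt X = (phiSt N q g h1 h2).measure X := by
  refine meas_eq_on_Ioo hfin fun a b ha hab hb => ?_
  rw [hIoc a b ha hab hb, phiSt_measure_Ioc]

lemma phiSt_le
    {Q : ℝ → ℝ → Kernel (FiniteMeasure E) (FiniteMeasure E)}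
    {V : ℝ → ℝ → (E → ℝ) → E → ℝ}
    {N : ℝ → ℝ → Measure (FiniteMeasure E)}
    (hQmar : ∀ r t, r ≤ t → IsMarkovKernel (Q r t))
    (hVBp : ∀ r t f, r ≤ t → Bp f → Bp (V r t f))
    (hQlap : ∀ r t, r ≤ t → ∀ (μ : FiniteMeasure E) f, Bp f →
      lap ((Q r t) μ) f = Real.exp (- ∫ x, V r t f x ∂(μ : Measure E)))
    (hN : ∀ r t, r ≤ t → IsProbabilityMeasure (N r t))
    (hpos : ∀ r t f, r ≤ t → Bp f → 0 < lap (N r t) f)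
    (hSCS : ∀ r s t, r ≤ s → s ≤ t → N r t = conv ((N r s).bind (Q s t ·)) (N s t))
    {q : ℝ} {g m : E → ℝ} (hg : Bp g) (hm : Bp m) (hgm : ∀ x, g x ≤ m x)
    {h1g : ∀ r, r ≤ q → 0 ≤ Jfun N r q g}
    {h2g : ∀ r r', r ≤ r' → r' ≤ q → Jfun N r' q g ≤ Jfun N r q g}
    {h1m : ∀ r, r ≤ q → 0 ≤ Jfun N r q m}
    {h2m : ∀ r r', r ≤ r' → r' ≤ q → Jfun N r' q m ≤ Jfun N r q m} :
    ∀ s : Set ℝ, (phiSt N q g h1g h2g).measure s ≤ (phiSt N q m h1m h2m).measure s := by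
  set δ : StieltjesFunction ℝ :=
    { toFun := fun r => -(SupJ N q m r) - -(SupJ N q g r)
      mono' := by
        intro a b hab
        simp only
        rcases lt_or_ge b q with hbq | hqb
        · have := SupJ_incr hQmar hVBp hQlap hN hpos hSCS hab hbq hg hm hgm
          linarith
        · have hb1 : SupJ N q g b = 0 := SupJ_of_ge hqb
          have hb2 : SupJ N q m b = 0 := SupJ_of_ge hqb
          have := SupJ_mono_f hN hpos hg hm hgm h2m (r := a)
          rw [hb1, hb2]
          linarith
      right_continuous' := fun x =>
        ((SupJ_right_cont h1m h2m x).sub (SupJ_right_cont h1g h2g x)) } with hδ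
  have heq : (phiSt N q m h1m h2m).measure = (phiSt N q g h1g h2g).measure + δ.measure := by
    refine MeasureTheory.Measure.ext_of_Ioc _ _ fun a b hab => ?_
    rw [Measure.add_apply, StieltjesFunction.measure_Ioc, StieltjesFunction.measure_Ioc,
      StieltjesFunction.measure_Ioc]
    have hg' : (0:ℝ) ≤ phiSt N q g h1g h2g b - phiSt N q g h1g h2g a :=
      sub_nonneg.2 ((phiSt N q g h1g h2g).mono hab.le)
    have hδ' : (0:ℝ) ≤ δ b - δ a := sub_nonneg.2 (δ.mono hab.le)
    rw [← ENNReal.ofReal_add hg' hδ']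
    congr 1
    show -(SupJ N q m b) - -(SupJ N q m a)
      = (-(SupJ N q g b) - -(SupJ N q g a)) + ((-(SupJ N q m b) - -(SupJ N q g b))
        - (-(SupJ N q m a) - -(SupJ N q g a)))
    ring
  intro s
  rw [heq, Measure.add_apply]
  exact le_self_add

/-- **Lemma 3.4.** For a skew convolution semigroup there is a diffuse Radon measure `ζ` on
`ℝ` such that for all `t` and `f ∈ B(E)^+` the atomless part of `G_t(f,·)` is absolutely
continuous with respect to `ζ`. -/
theorem exists_diffuse_dominating_measure
    (Q : ℝ → ℝ → Kernel (FiniteMeasure E) (FiniteMeasure E))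
    (V : ℝ → ℝ → (E → ℝ) → E → ℝ)
    (hQmar : ∀ r t, r ≤ t → IsMarkovKernel (Q r t))
    (hQid : ∀ t, Q t t = Kernel.id)
    (hQsem : ∀ r s t, r ≤ s → s ≤ t → ∀ μ, (Q r t) μ = ((Q r s) μ).bind (Q s t ·))
    (hVBp : ∀ r t f, r ≤ t → Bp f → Bp (V r t f))
    (hVsem : ∀ r s t f, r ≤ s → s ≤ t → Bp f → V r s (V s t f) = V r t f)
    (hQlap : ∀ r t, r ≤ t → ∀ (μ : FiniteMeasure E) f, Bp f →
      lap ((Q r t) μ) f = Real.exp (- ∫ x, V r t f x ∂(μ : Measure E)))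
    (N : ℝ → ℝ → Measure (FiniteMeasure E))
    (hN : ∀ r t, r ≤ t → IsProbabilityMeasure (N r t))
    (hpos : ∀ r t f, r ≤ t → Bp f → 0 < lap (N r t) f)
    (hSCS : ∀ r s t, r ≤ s → s ≤ t → N r t = conv ((N r s).bind (Q s t ·)) (N s t))
    (G : ℝ → (E → ℝ) → Measure ℝ)
    (hGfin : ∀ t f, Bp f → IsFiniteMeasureOnCompacts (G t f))
    (hGsupp : ∀ t f, Bp f → G t f (Set.Ioi t) = 0)
    (hGioc : ∀ t f, Bp f → ∀ r s, r ≤ s → s < t →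
      G t f (Set.Ioc r s)
        = ENNReal.ofReal
            ((⨆ u : (Set.Ioc r t : Set ℝ), Jfun N (u : ℝ) t f)
              - (⨆ v : (Set.Ioc s t : Set ℝ), Jfun N (v : ℝ) t f)))
    (hGatom : ∀ t f, Bp f →
      G t f {t} = ENNReal.ofReal (⨅ r : (Set.Iio t : Set ℝ), Jfun N (r : ℝ) t f)) :
    ∃ ζ : Measure ℝ, IsFiniteMeasureOnCompacts ζ ∧ (∀ x : ℝ, ζ {x} = 0) ∧
      ∀ t f, Bp f → atomlessPart (G t f) ≪ ζ := by
  classical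
  have hGioc' : ∀ t f, Bp f → ∀ r s, r ≤ s → s < t →
      G t f (Set.Ioc r s) = ENNReal.ofReal (SupJ N t f r - SupJ N t f s) := hGioc
  have hJnn : ∀ (q : ℝ) (g : E → ℝ), Bp g → ∀ r, r ≤ q → 0 ≤ Jfun N r q g :=
    fun q g hg r hrq => J_nonneg hN hpos hrq hg
  have hJanti : ∀ (q : ℝ) (g : E → ℝ), Bp g → ∀ a b, a ≤ b → b ≤ q →
      Jfun N b q g ≤ Jfun N a q g :=
    fun q g hg a b hab hbq => J_anti hQmar hVBp hQlap hN hpos hSCS hab hbq hg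
  set cm : ℕ → E → ℝ := fun m _ => (m : ℝ) with hcm
  have hBcm : ∀ m : ℕ, Bp (cm m) :=
    fun m => ⟨measurable_const, fun _ => Nat.cast_nonneg m, ⟨m, fun _ => le_rfl⟩⟩
  set μi : ℚ × ℚ × ℕ → Measure ℝ := fun i =>
    (atomlessPart (G (i.2.1 : ℝ) (cm i.2.2))).restrict
      (Set.Ioc (i.1 : ℝ) (i.2.1 : ℝ)) with hμi
  have hμifin : ∀ i, μi i Set.univ ≠ ⊤ := by
    intro i
    haveI := hGfin (i.2.1 : ℝ) (cm i.2.2) (hBcm i.2.2)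
    rw [hμi]
    simp only
    rw [Measure.restrict_apply MeasurableSet.univ, Set.univ_inter, atomlessPart,
      Measure.restrict_apply measurableSet_Ioc]
    refine ne_of_lt (lt_of_le_of_lt (measure_mono ?_)
      (IsCompact.measure_lt_top (isCompact_Icc (a := (i.1 : ℝ)) (b := (i.2.1 : ℝ)))))
    exact Set.inter_subset_left.trans Set.Ioc_subset_Icc_self
  set c : ℚ × ℚ × ℕ → ℝ≥0∞ := fun i =>
    (2 : ℝ≥0∞)⁻¹ ^ (Encodable.encode i) * (μi i Set.univ + 1)⁻¹ with hc
  have hcne0 : ∀ i, c i ≠ 0 := by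
    intro i
    refine mul_ne_zero (pow_ne_zero _ (ENNReal.inv_ne_zero.2 (by norm_num))) ?_
    exact ENNReal.inv_ne_zero.2 (ENNReal.add_ne_top.2 ⟨hμifin i, ENNReal.one_ne_top⟩)
  refine ⟨Measure.sum (fun i => c i • μi i), ?_, ?_, ?_⟩
  · -- finite on compacts
    have hζfin : (Measure.sum fun i => c i • μi i) Set.univ < ⊤ := by
      rw [Measure.sum_apply _ MeasurableSet.univ]
      have hle : ∀ i, (c i • μi i) Set.univ ≤ (2 : ℝ≥0∞)⁻¹ ^ (Encodable.encode i) := by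
        intro i
        rw [Measure.smul_apply, smul_eq_mul, hc]
        simp only
        rw [mul_assoc]
        have h1 : (μi i Set.univ + 1)⁻¹ * μi i Set.univ ≤ 1 := by
          rw [mul_comm]
          have hne : μi i Set.univ + 1 ≠ 0 := by simp
          have hnt : μi i Set.univ + 1 ≠ ⊤ :=
            ENNReal.add_ne_top.2 ⟨hμifin i, ENNReal.one_ne_top⟩
          calc μi i Set.univ * (μi i Set.univ + 1)⁻¹
              ≤ (μi i Set.univ + 1) * (μi i Set.univ + 1)⁻¹ :=
                mul_le_mul_left (self_le_add_right _ _) _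
            _ = 1 := ENNReal.mul_inv_cancel hne hnt
        calc (2 : ℝ≥0∞)⁻¹ ^ (Encodable.encode i) * ((μi i Set.univ + 1)⁻¹ * μi i Set.univ)
            ≤ (2 : ℝ≥0∞)⁻¹ ^ (Encodable.encode i) * 1 := mul_le_mul_right h1 _
          _ = _ := mul_one _
      calc (∑' i, (c i • μi i) Set.univ)
          ≤ ∑' i : ℚ × ℚ × ℕ, (2 : ℝ≥0∞)⁻¹ ^ (Encodable.encode i) :=
            ENNReal.tsum_le_tsum hle
        _ ≤ ∑' n : ℕ, (2 : ℝ≥0∞)⁻¹ ^ n :=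
            ENNReal.tsum_comp_le_tsum_of_injective Encodable.encode_injective _
        _ < ⊤ := by
            rw [ENNReal.tsum_geometric]
            refine ENNReal.inv_lt_top.2 ?_
            have h2 : (2 : ℝ≥0∞)⁻¹ < 1 := by
              rw [ENNReal.inv_lt_one]
              exact ENNReal.one_lt_two
            exact tsub_pos_of_lt h2
    exact ⟨fun K hK => lt_of_le_of_lt (measure_mono (Set.subset_univ K)) hζfin⟩
  · -- atomless
    intro x
    rw [Measure.sum_apply _ (measurableSet_singleton x)]
    refine ENNReal.tsum_eq_zero.2 fun i => ?_
    rw [Measure.smul_apply, smul_eq_mul]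
    have : μi i {x} = 0 := by
      rw [hμi]
      simp only
      rw [Measure.restrict_apply (measurableSet_singleton x), atomlessPart,
        Measure.restrict_apply ((measurableSet_singleton x).inter measurableSet_Ioc)]
      by_cases hx : G (i.2.1 : ℝ) (cm i.2.2) {x} = 0
      · exact measure_mono_null (Set.inter_subset_left.trans Set.inter_subset_left) hx
      · have hempty : {x} ∩ Set.Ioc (i.1 : ℝ) (i.2.1 : ℝ)
            ∩ {z | G (i.2.1 : ℝ) (cm i.2.2) {z} = 0} = ∅ := by
          rw [Set.eq_empty_iff_forall_notMem]
          rintro y ⟨⟨hy1, _⟩, hy2⟩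
          rw [Set.mem_singleton_iff] at hy1
          subst hy1
          exact hx hy2
        rw [hempty, measure_empty]
    rw [this, mul_zero]
  · -- absolute continuity
    intro t f hf
    refine Measure.AbsolutelyContinuous.mk fun A hA h0 => ?_
    have hμiA : ∀ i, μi i A = 0 := by
      intro i
      rw [Measure.sum_apply _ hA] at h0
      have h1 := ENNReal.tsum_eq_zero.1 h0 i
      rw [Measure.smul_apply, smul_eq_mul] at h1
      exact (mul_eq_zero.1 h1).resolve_left (hcne0 i)
    set Sf : Set ℝ := {z | G t f {z} = 0} with hSf
    rw [atomlessPart, Measure.restrict_apply hA]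
    -- the pieces
    set Z : ℚ × ℚ → Set ℝ := fun p =>
      if ((p.2 : ℝ) < t) then A ∩ Sf ∩ Set.Ioo (p.1 : ℝ) (p.2 : ℝ) else ∅ with hZ
    have hcover : A ∩ Sf ⊆ (⋃ p : ℚ × ℚ, Z p) ∪ (({t} ∩ Sf) ∪ Set.Ioi t) := by
      rintro y ⟨hyA, hySf⟩
      rcases lt_trichotomy y t with hyt | hyt | hyt
      · obtain ⟨q₂, hq₂1, hq₂2⟩ := exists_rat_btwn hyt
        obtain ⟨q₁, hq₁⟩ := exists_rat_lt y
        left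
        refine Set.mem_iUnion.2 ⟨(q₁, q₂), ?_⟩
        rw [hZ]
        simp only [if_pos hq₂2]
        exact ⟨⟨hyA, hySf⟩, hq₁, hq₂1⟩
      · right; left; exact ⟨by rw [hyt]; exact rfl, hySf⟩
      · right; right; exact hyt
    refine measure_mono_null hcover ?_
    refine measure_union_null (measure_iUnion_null fun p => ?_) (measure_union_null ?_ ?_)
    · -- each piece
      rw [hZ]
      simp only
      split_ifs with hq2t
      swap
      · exact measure_empty
      obtain ⟨q₁, q₂⟩ := p
      simp only at hq2t ⊢
      rcases le_or_gt (q₂ : ℝ) (q₁ : ℝ) with hq | hq12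
      · refine measure_mono_null Set.inter_subset_right ?_
        rw [Set.Ioo_eq_empty hq.not_gt, measure_empty]
      -- main case
      set g : E → ℝ := V (q₂ : ℝ) t f with hg
      have hBg : Bp g := hVBp (q₂ : ℝ) t f hq2t.le hf
      obtain ⟨Cg, hCg⟩ := hBg.2.2
      set m : ℕ := ⌈Cg⌉₊ with hm
      have hgm : ∀ x, g x ≤ cm m x := fun x => (hCg x).trans (Nat.le_ceil Cg)
      set ρg := (phiSt N (q₂ : ℝ) g (hJnn _ g hBg) (hJanti _ g hBg)).measure with hρg
      set ρm := (phiSt N (q₂ : ℝ) (cm m) (hJnn _ (cm m) (hBcm m))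
        (hJanti _ (cm m) (hBcm m))).measure with hρm
      haveI := hGfin t f hf
      haveI := hGfin (q₂ : ℝ) (cm m) (hBcm m)
      -- window identity for G t f
      have hWf : ∀ X, MeasurableSet X → X ⊆ Set.Ioo (q₁ : ℝ) (q₂ : ℝ) →
          G t f X = ρg X := by
        refine G_window (G t f) ?_ ?_
        · exact ne_of_lt (lt_of_le_of_lt
            (measure_mono (Set.Ioo_subset_Icc_self))
            (IsCompact.measure_lt_top (isCompact_Icc)))
        · intro a b ha hab hb
          have h1 := hGioc' t f hf a b hab (hb.trans hq2t)
          rw [h1]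
          have h2 := SupJ_split hQmar hVBp hQlap hN hpos hSCS
            (lt_of_le_of_lt hab hb) hq2t hf
          have h3 := SupJ_split hQmar hVBp hQlap hN hpos hSCS hb hq2t hf
          rw [← hg] at h2 h3
          congr 1
          rw [h2, h3]
          ring
      -- window identity for G q₂ (cm m)
      have hWmIoc : ∀ a b : ℝ, a ≤ b → b < (q₂ : ℝ) →
          G (q₂ : ℝ) (cm m) (Set.Ioc a b)
            = ENNReal.ofReal (SupJ N (q₂ : ℝ) (cm m) a - SupJ N (q₂ : ℝ) (cm m) b) :=
        fun a b hab hb => hGioc' (q₂ : ℝ) (cm m) (hBcm m) a b hab hb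
      have hWm : ∀ X, MeasurableSet X → X ⊆ Set.Ioo (q₁ : ℝ) (q₂ : ℝ) →
          G (q₂ : ℝ) (cm m) X = ρm X := by
        refine G_window (G (q₂ : ℝ) (cm m)) ?_ fun a b ha hab hb => hWmIoc a b hab hb
        exact ne_of_lt (lt_of_le_of_lt (measure_mono Set.Ioo_subset_Icc_self)
          (IsCompact.measure_lt_top isCompact_Icc))
      have hWm' : ∀ x : ℝ, x < (q₂ : ℝ) → G (q₂ : ℝ) (cm m) {x} = ρm {x} := by
        intro x hx
        refine G_window (q' := x - 1) (G (q₂ : ℝ) (cm m)) ?_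
          (fun a b ha hab hb => hWmIoc a b hab hb) {x} (measurableSet_singleton x) ?_
        · exact ne_of_lt (lt_of_le_of_lt (measure_mono Set.Ioo_subset_Icc_self)
            (IsCompact.measure_lt_top isCompact_Icc))
        · intro y hy
          rw [Set.mem_singleton_iff] at hy
          subst hy
          exact ⟨by linarith, hx⟩
      have hle : ∀ s : Set ℝ, ρg s ≤ ρm s :=
        phiSt_le hQmar hVBp hQlap hN hpos hSCS hBg (hBcm m) hgm
      have hDg : Set.Countable {z | ρg {z} ≠ 0} := st_atoms_countable _
      have hDm : Set.Countable {z | ρm {z} ≠ 0} := st_atoms_countable _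
      set Sm : Set ℝ := {z | G (q₂ : ℝ) (cm m) {z} = 0} with hSm
      have hSmc : Set.Countable Smᶜ := by
        refine Set.Countable.mono ?_ (hDm.union (Set.countable_singleton (q₂ : ℝ)))
        intro z hz
        rw [Set.mem_compl_iff, hSm, Set.mem_setOf_eq] at hz
        rcases lt_trichotomy z (q₂ : ℝ) with h | h | h
        · left
          rw [Set.mem_setOf_eq, ← hWm' z h]
          exact hz
        · right; exact h
        · exfalso
          apply hz
          refine measure_mono_null ?_ (hGsupp (q₂ : ℝ) (cm m) (hBcm m))
          intro y hy
          rw [Set.mem_singleton_iff] at hy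
          subst hy
          exact h
      have hSm_meas : MeasurableSet Sm := by
        rw [← compl_compl Sm]
        exact hSmc.measurableSet.compl
      set X₂ : Set ℝ := (A ∩ Set.Ioo (q₁ : ℝ) (q₂ : ℝ) ∩ Sm) \ {z | ρg {z} ≠ 0} with hX₂
      have hX₂meas : MeasurableSet X₂ :=
        ((hA.inter measurableSet_Ioo).inter hSm_meas).diff hDg.measurableSet
      have hX₂sub : X₂ ⊆ Set.Ioo (q₁ : ℝ) (q₂ : ℝ) :=
        fun z hz => hz.1.1.2
      -- cover the piece
      have hsub : A ∩ Sf ∩ Set.Ioo (q₁ : ℝ) (q₂ : ℝ) ⊆ X₂ ∪ (Smᶜ ∩ Sf) := by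
        rintro y ⟨⟨hyA, hySf⟩, hyIoo⟩
        by_cases hySm : y ∈ Sm
        · left
          refine ⟨⟨⟨hyA, hyIoo⟩, hySm⟩, ?_⟩
          rw [Set.mem_setOf_eq, not_not,
            ← hWf {y} (measurableSet_singleton y)
              (by intro z hz; rw [Set.mem_singleton_iff] at hz; subst hz; exact hyIoo)]
          exact hySf
        · right; exact ⟨hySm, hySf⟩
      refine measure_mono_null hsub (measure_union_null ?_ ?_)
      · -- the measurable main part
        have hchain : G t f X₂ ≤ G (q₂ : ℝ) (cm m) (A ∩ Set.Ioc (q₁ : ℝ) (q₂ : ℝ) ∩ Sm) := by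
          calc G t f X₂ = ρg X₂ := hWf X₂ hX₂meas hX₂sub
            _ ≤ ρm X₂ := hle X₂
            _ = G (q₂ : ℝ) (cm m) X₂ := (hWm X₂ hX₂meas hX₂sub).symm
            _ ≤ _ := measure_mono (by
                rintro z ⟨⟨⟨hzA, hzIoo⟩, hzSm⟩, _⟩
                exact ⟨⟨hzA, Set.Ioo_subset_Ioc_self hzIoo⟩, hzSm⟩)
        have hzero : G (q₂ : ℝ) (cm m) (A ∩ Set.Ioc (q₁ : ℝ) (q₂ : ℝ) ∩ Sm) = 0 := by
          have h1 := hμiA (q₁, q₂, m)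
          rw [hμi] at h1
          simp only at h1
          rw [Measure.restrict_apply hA, atomlessPart,
            Measure.restrict_apply (hA.inter measurableSet_Ioc)] at h1
          exact h1
        exact le_antisymm (hchain.trans hzero.le) zero_le
      · -- countable exceptional part
        refine measure_mono_null (?_ : Smᶜ ∩ Sf ⊆ ⋃ z ∈ Smᶜ, ({z} ∩ Sf)) ?_
        · rintro y ⟨hy1, hy2⟩
          exact Set.mem_biUnion hy1 ⟨rfl, hy2⟩
        · rw [measure_biUnion_null_iff hSmc]
          intro z hz
          by_cases hzSf : z ∈ Sf
          · exact measure_mono_null Set.inter_subset_left hzSf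
          · have hemp : ({z} : Set ℝ) ∩ Sf = ∅ := by
              rw [Set.eq_empty_iff_forall_notMem]
              rintro y ⟨hy1, hy2⟩
              rw [Set.mem_singleton_iff] at hy1
              subst hy1
              exact hzSf hy2
            rw [hemp, measure_empty]
    · by_cases ht : t ∈ Sf
      · exact measure_mono_null Set.inter_subset_left ht
      · have : ({t} : Set ℝ) ∩ Sf = ∅ := by
          rw [Set.eq_empty_iff_forall_notMem]
          rintro y ⟨hy1, hy2⟩
          rw [Set.mem_singleton_iff] at hy1
          subst hy1
          exact ht hy2
        rw [this, measure_empty]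
    · exact hGsupp t f hf


end
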